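/- With A, I, f, J, A' and J^st as above, let μ : A → A₁ = A/J be the quotient map, I₁ = μ(I), f₁ = μ(f). Then A'/J^st is isomorphic to the affine modification A₁[I₁/f₁] of A₁. -/
import Mathlib

section Aux
variable {A : Type*} [CommRing A] [IsDomain A]

theorem aux_rep (I : Ideal A) (f : A) (hfI : f ∈ I) (hf0 : f ≠ 0)
    {x : FractionRing A}
    (hx : x ∈ Algebra.adjoin A ((fun a => algebraMap A (FractionRing A) a /
      algebraMap A (FractionRing A) f) '' (I : Set A))) :
    ∃ a : A, ∃ k : ℕ, a ∈ I ^ k ∧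
      x * (algebraMap A (FractionRing A) f) ^ k = algebraMap A (FractionRing A) a := by
  have hfK : algebraMap A (FractionRing A) f ≠ 0 := by
    simpa using hf0
  induction hx using Algebra.adjoin_induction with
  | mem x hx =>
      obtain ⟨i, hi, rfl⟩ := hx
      exact ⟨i, 1, by simpa using hi, by simp [div_mul_cancel₀ _ hfK]⟩
  | algebraMap r => exact ⟨r, 0, by simp, by simp⟩
  | add x y hx hy ihx ihy =>
      obtain ⟨a, k, ha, hax⟩ := ihx
      obtain ⟨b, m, hb, hby⟩ := ihy
      refine ⟨a * f ^ m + b * f ^ k, k + m, ?_, ?_⟩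
      · rw [pow_add]
        exact add_mem (Ideal.mul_mem_mul ha (Ideal.pow_mem_pow hfI m))
          (mul_comm (I ^ k) (I ^ m) ▸ Ideal.mul_mem_mul hb (Ideal.pow_mem_pow hfI k))
      · push_cast [map_add, map_mul, map_pow]
        rw [pow_add]
        rw [← hax, ← hby]; ring
  | mul x y hx hy ihx ihy =>
      obtain ⟨a, k, ha, hax⟩ := ihx
      obtain ⟨b, m, hb, hby⟩ := ihy
      refine ⟨a * b, k + m, ?_, ?_⟩
      · rw [pow_add]; exact Ideal.mul_mem_mul ha hb
      · rw [map_mul, pow_add, ← hax, ← hby]; ring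

theorem aux_powdiv {B : Type*} [CommRing B] [IsDomain B] (I₁ : Ideal B) (f₁ : B)
    (k : ℕ) (b : B) (hb : b ∈ I₁ ^ k) :
    algebraMap B (FractionRing B) b * ((algebraMap B (FractionRing B) f₁)⁻¹) ^ k ∈
      Algebra.adjoin B ((fun a => algebraMap B (FractionRing B) a /
        algebraMap B (FractionRing B) f₁) '' (I₁ : Set B)) := by
  induction k generalizing b with
  | zero => simpa using Subalgebra.algebraMap_mem _ b
  | succ k ih =>
      rw [pow_succ] at hb
      refine Submodule.mul_induction_on hb (fun c hc d hd => ?_) (fun x y hx hy => ?_)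
      · have h : algebraMap B (FractionRing B) (c * d) *
            ((algebraMap B (FractionRing B) f₁)⁻¹) ^ (k + 1) =
            (algebraMap B (FractionRing B) c * ((algebraMap B (FractionRing B) f₁)⁻¹) ^ k) *
            (algebraMap B (FractionRing B) d / algebraMap B (FractionRing B) f₁) := by
          rw [map_mul, div_eq_mul_inv, pow_succ]; ring
        rw [h]
        exact mul_mem (ih c hc) (Algebra.subset_adjoin ⟨d, hd, rfl⟩)
      · rw [map_add, add_mul]
        exact add_mem hx hy

set_option synthInstance.maxHeartbeats 1000000 in
set_option maxHeartbeats 1600000 in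
theorem aux_main (I : Ideal A) (f : A) (hfI : f ∈ I) (hf0 : f ≠ 0)
    (J : Ideal A) [hJ : J.IsPrime] (hfJ : f ∉ J) :
    ∃ Jst : Ideal ↥(Algebra.adjoin A ((fun a => algebraMap A (FractionRing A) a /
        algebraMap A (FractionRing A) f) '' (I : Set A))),
      (↑Jst : Set ↥(Algebra.adjoin A ((fun a => algebraMap A (FractionRing A) a /
        algebraMap A (FractionRing A) f) '' (I : Set A)))) =
        {a' : ↥(Algebra.adjoin A ((fun a => algebraMap A (FractionRing A) a /
            algebraMap A (FractionRing A) f) '' (I : Set A))) | ∃ k : ℕ, ∃ j ∈ J,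
          (a' : FractionRing A) * (algebraMap A (FractionRing A) f) ^ k
            = algebraMap A (FractionRing A) j} ∧
      Nonempty ((↥(Algebra.adjoin A ((fun a => algebraMap A (FractionRing A) a /
          algebraMap A (FractionRing A) f) '' (I : Set A))) ⧸ Jst) ≃+*
        ↥(Algebra.adjoin (A ⧸ J)
          ((fun a => algebraMap (A ⧸ J) (FractionRing (A ⧸ J)) a /
            algebraMap (A ⧸ J) (FractionRing (A ⧸ J)) (Ideal.Quotient.mk J f)) ''
            ((Ideal.map (Ideal.Quotient.mk J) I) : Set (A ⧸ J))))) := by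
  classical
  set K := FractionRing A with hK
  set μ : A →+* A ⧸ J := Ideal.Quotient.mk J with hμ
  set K₁ := FractionRing (A ⧸ J) with hK₁
  set A' := Algebra.adjoin A ((fun a => algebraMap A K a / algebraMap A K f) '' (I : Set A))
    with hA'
  set A₁' := Algebra.adjoin (A ⧸ J)
      ((fun a => algebraMap (A ⧸ J) K₁ a / algebraMap (A ⧸ J) K₁ (μ f)) ''
        ((Ideal.map μ I) : Set (A ⧸ J))) with hA₁'
  have hfK : algebraMap A K f ≠ 0 := by simpa using hf0
  have hf₁0 : μ f ≠ 0 := by simpa [hμ, Ideal.Quotient.eq_zero_iff_mem] using hfJ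
  have hfK₁ : algebraMap (A ⧸ J) K₁ (μ f) ≠ 0 := by simpa using hf₁0
  have hu : IsUnit (algebraMap A K f) := isUnit_iff_ne_zero.mpr hfK
  set g₁ : A →+* K₁ := (algebraMap (A ⧸ J) K₁).comp μ with hg₁
  have hg₁f : g₁ f ≠ 0 := hfK₁
  have hu₁ : IsUnit (g₁ f) := isUnit_iff_ne_zero.mpr hg₁f
  set θ : Localization.Away f →+* K := Localization.awayLift (algebraMap A K) f hu with hθ
  set ψ : Localization.Away f →+* K₁ := Localization.awayLift g₁ f hu₁ with hψ
  have θmk : ∀ (a : A) (j : ℕ), θ (Localization.mk a ⟨f ^ j, j, rfl⟩) =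
      algebraMap A K a * ((algebraMap A K f)⁻¹) ^ j := fun a j =>
    Localization.awayLift_mk (algebraMap A K) f a _ (mul_inv_cancel₀ hfK) j
  have ψmk : ∀ (a : A) (j : ℕ), ψ (Localization.mk a ⟨f ^ j, j, rfl⟩) =
      g₁ a * ((g₁ f)⁻¹) ^ j := fun a j =>
    Localization.awayLift_mk g₁ f a _ (mul_inv_cancel₀ hg₁f) j
  have θalgmap : ∀ a : A, θ (algebraMap A (Localization.Away f) a) = algebraMap A K a :=
    fun a => IsLocalization.Away.lift_eq f hu a
  have θinj : Function.Injective θ := by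
    rw [injective_iff_map_eq_zero]
    intro x hx
    induction x using Localization.induction_on with
    | H y =>
      obtain ⟨a, sv, hsv⟩ := y
      obtain ⟨n, rfl⟩ := hsv
      have h0 : algebraMap A K a * ((algebraMap A K f)⁻¹) ^ n = 0 := by
        rw [← θmk a n]; exact hx
      have ha : a = 0 := by
        rcases mul_eq_zero.mp h0 with h | h
        · simpa using h
        · exact absurd h (pow_ne_zero _ (inv_ne_zero hfK))
      subst ha
      exact Localization.mk_zero _
  let θa : Localization.Away f →ₐ[A] K := { toRingHom := θ, commutes' := θalgmap }
  have hle : A' ≤ θa.range := by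
    rw [hA', Algebra.adjoin_le_iff]
    rintro _ ⟨i, hi, rfl⟩
    refine ⟨Localization.mk i ⟨f ^ 1, 1, rfl⟩, ?_⟩
    show θ _ = _
    rw [θmk]
    simp [div_eq_mul_inv]
  let e : Localization.Away f ≃ₐ[A] θa.range := AlgEquiv.ofInjective θa θinj
  let inc : ↥A' →ₐ[A] ↥θa.range := Subalgebra.inclusion hle
  let Φ : ↥A' →+* K₁ := ψ.comp ((e.symm.toAlgHom.toRingHom).comp inc.toRingHom)
  have Φeq : ∀ (x : ↥A') (c : Localization.Away f), θ c = (x : K) → Φ x = ψ c := by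
    intro x c hc
    have h1 : inc x = e c := by
      apply Subtype.ext
      show ((x : K)) = _
      rw [show ((e c : θa.range) : K) = θa c from by
        simp [e, AlgEquiv.ofInjective_apply]]
      exact hc.symm
    show ψ (e.symm (inc x)) = ψ c
    rw [h1, AlgEquiv.symm_apply_apply]
  have Φrep : ∀ (x : ↥A') (a : A) (k : ℕ),
      (x : K) * (algebraMap A K f) ^ k = algebraMap A K a →
      Φ x = g₁ a * ((g₁ f)⁻¹) ^ k := by
    intro x a k h
    have hθc : θ (Localization.mk a ⟨f ^ k, k, rfl⟩) = (x : K) := by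
      rw [θmk, ← h, mul_assoc, ← mul_pow, mul_inv_cancel₀ hfK, one_pow, mul_one]
    rw [Φeq x _ hθc, ψmk]
  have memA₁' : ∀ x : ↥A', Φ x ∈ A₁' := by
    intro x
    obtain ⟨a, k, haIk, hx⟩ := aux_rep I f hfI hf0 x.2
    rw [Φrep x a k hx]
    have hmem : μ a ∈ (Ideal.map μ I) ^ k := by
      rw [← Ideal.map_pow]; exact Ideal.mem_map_of_mem μ haIk
    exact aux_powdiv (Ideal.map μ I) (μ f) k (μ a) hmem
  let Φ' : ↥A' →+* ↥A₁' := Φ.codRestrict A₁' memA₁'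
  have Φ'coe : ∀ x, (Φ' x : K₁) = Φ x := fun _ => rfl
  have Φ'surj : Function.Surjective Φ' := by
    rintro ⟨y, hy⟩
    induction hy using Algebra.adjoin_induction with
    | mem y hy =>
        obtain ⟨b, hb, rfl⟩ := hy
        obtain ⟨a, haI, rfl⟩ :=
          (Ideal.mem_map_iff_of_surjective μ Ideal.Quotient.mk_surjective).mp hb
        refine ⟨⟨algebraMap A K a / algebraMap A K f,
          Algebra.subset_adjoin ⟨a, haI, rfl⟩⟩, ?_⟩
        apply Subtype.ext
        rw [Φ'coe]
        rw [Φrep _ a 1 (by rw [pow_one]; exact div_mul_cancel₀ _ hfK)]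
        rw [pow_one, ← div_eq_mul_inv]
        rfl
    | algebraMap r =>
        obtain ⟨a, rfl⟩ := Ideal.Quotient.mk_surjective r
        refine ⟨⟨algebraMap A K a, Subalgebra.algebraMap_mem _ a⟩, ?_⟩
        apply Subtype.ext
        rw [Φ'coe]
        rw [Φrep _ a 0 (by simp)]
        rw [pow_zero, mul_one]
        rfl
    | add x y hx hy ihx ihy =>
        obtain ⟨x', hx'⟩ := ihx
        obtain ⟨y', hy'⟩ := ihy
        have hx'' : Φ x' = x := by rw [← Φ'coe, hx']
        have hy'' : Φ y' = y := by rw [← Φ'coe, hy']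
        refine ⟨x' + y', Subtype.ext ?_⟩
        rw [Φ'coe, map_add, hx'', hy'']
    | mul x y hx hy ihx ihy =>
        obtain ⟨x', hx'⟩ := ihx
        obtain ⟨y', hy'⟩ := ihy
        have hx'' : Φ x' = x := by rw [← Φ'coe, hx']
        have hy'' : Φ y' = y := by rw [← Φ'coe, hy']
        refine ⟨x' * y', Subtype.ext ?_⟩
        rw [Φ'coe, map_mul, hx'', hy'']
  refine ⟨RingHom.ker Φ', ?_, ⟨RingHom.quotientKerEquivOfSurjective Φ'surj⟩⟩
  ext x
  simp only [SetLike.mem_coe, RingHom.mem_ker, Set.mem_setOf_eq]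
  have hcoe : Φ' x = 0 ↔ Φ x = 0 := by
    rw [Subtype.ext_iff]
    exact Iff.rfl
  rw [hcoe]
  constructor
  · intro h0
    obtain ⟨a, k, haIk, hx⟩ := aux_rep I f hfI hf0 x.2
    refine ⟨k, a, ?_, hx⟩
    rw [Φrep x a k hx] at h0
    have hga : g₁ a = 0 := by
      rcases mul_eq_zero.mp h0 with h | h
      · exact h
      · exact absurd h (pow_ne_zero _ (inv_ne_zero hg₁f))
    have hμa : μ a = 0 := by
      have h4 : algebraMap (A ⧸ J) K₁ (μ a) = 0 := hga
      simpa using h4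
    exact Ideal.Quotient.eq_zero_iff_mem.mp hμa
  · rintro ⟨k, j, hj, hjx⟩
    obtain ⟨a, m, haIm, hx⟩ := aux_rep I f hfI hf0 x.2
    have hA : a * f ^ k = j * f ^ m := by
      apply IsFractionRing.injective A K
      rw [map_mul, map_mul, map_pow, map_pow, ← hx, ← hjx]; ring
    have hμa : μ a = 0 := by
      have h2 : μ a * (μ f) ^ k = 0 := by
        have h3 := congrArg μ hA
        rw [map_mul, map_mul, map_pow, map_pow] at h3
        rw [h3, Ideal.Quotient.eq_zero_iff_mem.mpr hj, zero_mul]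
      rcases mul_eq_zero.mp h2 with h | h
      · exact h
      · exact absurd h (pow_ne_zero _ hf₁0)
    rw [Φrep x a m hx]
    have hg : g₁ a = 0 := by
      show algebraMap (A ⧸ J) K₁ (μ a) = 0
      rw [hμa, map_zero]
    rw [hg, zero_mul]

end Aux


set_option maxHeartbeats 1600000 in
set_option synthInstance.maxHeartbeats 1000000 in
/-- How a modification affects a subvariety: with `J^st` the strict transform of the
prime ideal `J` in `A' = A[I/f]`, one has `A'/J^st ≅ A₁[I₁/f₁]` where `A₁ = A/J`,
`I₁ = μ(I)`, `f₁ = μ(f)` for the quotient map `μ : A → A/J`. -/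
theorem stmt_7 {A : Type*} [CommRing A] [IsDomain A] [Algebra ℂ A]
    (I : Ideal A) (f : A) (hfI : f ∈ I) (hf0 : f ≠ 0)
    (J : Ideal A) [hJ : J.IsPrime] (hfJ : f ∉ J) :
    letI K := FractionRing A
    letI A' : Subalgebra A K :=
      Algebra.adjoin A ((fun a => algebraMap A K a / algebraMap A K f) '' (I : Set A))
    letI A₁ := A ⧸ J
    letI K₁ := FractionRing A₁
    letI μ := Ideal.Quotient.mk J
    letI I₁ : Ideal A₁ := Ideal.map μ I
    letI f₁ : A₁ := μ f
    letI A₁' : Subalgebra A₁ K₁ :=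
      Algebra.adjoin A₁
        ((fun a => algebraMap A₁ K₁ a / algebraMap A₁ K₁ f₁) '' (I₁ : Set A₁))
    ∃ Jst : Ideal A',
      (↑Jst : Set A') =
        {a' : A' | ∃ k : ℕ, ∃ j ∈ J,
          (a' : K) * (algebraMap A K f) ^ k = algebraMap A K j} ∧
      Nonempty ((A' ⧸ Jst) ≃+* A₁') := by
  exact aux_main I f hfI hf0 J hfJ
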